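/- If M and N are small fb-tableaux of size n, then their meet and join in the lattice esTam_n are small; if M and N are binary fb-tableaux of size n, then their meet and join in esTam_n are binary. Consequently, the small fb-tableaux form a sublattice sTam_n of esTam_n (the slow Tamari lattice), and the binary fb-tableaux form a sublattice Tam_n of sTam_n. -/
import Mathlib


open scoped Classical

namespace EsTam

/-- A cell `(i, j)`: `i` is the row index, `j` the column index. -/
abbrev Cell := ℕ × ℕ

/-- Membership in the staircase shape of size `n`: rows `1` and `2` consist of the
cells `(i, j)` with `1 ≤ j ≤ n`, and row `i` for `3 ≤ i ≤ n` consists of the cells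
`(i, j)` with `i - 1 ≤ j ≤ n`. -/
def IsCell (n : ℕ) (c : Cell) : Prop :=
  1 ≤ c.1 ∧ c.1 ≤ n ∧ 1 ≤ c.2 ∧ c.2 ≤ n ∧ (c.1 ≤ 2 ∨ c.1 - 1 ≤ c.2)

/-- The root cell `(1, n)`. -/
def root (n : ℕ) : Cell := (1, n)

/-- The border cells `(i, i - 1)` for `2 ≤ i ≤ n`. -/
def IsBorder (n : ℕ) (c : Cell) : Prop :=
  2 ≤ c.1 ∧ c.1 ≤ n ∧ c.2 = c.1 - 1

/-- An fb-tableau of size `n`: a set of cells of the staircase shape containing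
the root and all border cells, and such that every cell other than the root has a
cell of the tableau strictly to its left in its row (same `i`, larger `j`) or
strictly above it in its column (same `j`, smaller `i`). -/
structure FB (n : ℕ) where
  cells : Set Cell
  isCell_of_mem : ∀ c ∈ cells, IsCell n c
  root_mem : root n ∈ cells
  border_mem : ∀ c : Cell, IsBorder n c → c ∈ cells
  supported : ∀ c ∈ cells, c ≠ root n →
    (∃ j', c.2 < j' ∧ ((c.1, j') : Cell) ∈ cells) ∨
    (∃ i', i' < c.1 ∧ ((i', c.2) : Cell) ∈ cells)

variable {n : ℕ}

/-- `c` is a left-arrow of `T`: a cell of `T`, other than the root, with no cell of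
`T` strictly to its left in its row. -/
def IsLeftArrow (T : FB n) (c : Cell) : Prop :=
  c ∈ T.cells ∧ c ≠ root n ∧ ∀ j', c.2 < j' → ((c.1, j') : Cell) ∉ T.cells

/-- `c` is an up-arrow of `T`: a cell of `T`, other than the root, with no cell of
`T` strictly above it in its column. -/
def IsUpArrow (T : FB n) (c : Cell) : Prop :=
  c ∈ T.cells ∧ c ≠ root n ∧ ∀ i', i' < c.1 → ((i', c.2) : Cell) ∉ T.cells

/-- The row space of `T`: cells lying, in their row, weakly to the right of the
root or of a left-arrow of `T`. -/
def RowSp (T : FB n) : Set Cell :=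
  {c | IsCell n c ∧ ∃ j', c.2 ≤ j' ∧
    (((c.1, j') : Cell) = root n ∨ IsLeftArrow T (c.1, j'))}

/-- The column space of `T`: cells lying, in their column, weakly below the root or
an up-arrow of `T`. -/
def ColSp (T : FB n) : Set Cell :=
  {c | IsCell n c ∧ ∃ i', i' ≤ c.1 ∧
    (((i', c.2) : Cell) = root n ∨ IsUpArrow T (i', c.2))}

/-- `c` is a free cell of `T`: it lies strictly below the up-arrow of `T` in its
column and strictly to the right of the left-arrow of `T` in its row. -/
def IsFree (T : FB n) (c : Cell) : Prop :=
  IsCell n c ∧ (∃ i', i' < c.1 ∧ IsUpArrow T (i', c.2)) ∧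
    (∃ j', c.2 < j' ∧ IsLeftArrow T (c.1, j'))

/-- The relation `S ⊲ T` on fb-tableaux of size `n`. -/
def Lhd (S T : FB n) : Prop :=
  ColSp S ⊆ ColSp T ∧ RowSp T ⊆ RowSp S ∧
    ∀ c : Cell, IsFree S c → IsFree T c → c ∈ S.cells → c ∈ T.cells

/-- `T` covers `S` in `esTam n`. -/
def CovRel (S T : FB n) : Prop :=
  Lhd S T ∧ S ≠ T ∧ ∀ U : FB n, Lhd S U → Lhd U T → U = S ∨ U = T

/-- `m` is the greatest lower bound of `x` and `y` in `esTam n`. -/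
def IsMeet (x y m : FB n) : Prop :=
  Lhd m x ∧ Lhd m y ∧ ∀ t : FB n, Lhd t x → Lhd t y → Lhd t m

/-- `j` is the least upper bound of `x` and `y` in `esTam n`. -/
def IsJoin (x y j : FB n) : Prop :=
  Lhd x j ∧ Lhd y j ∧ ∀ t : FB n, Lhd x t → Lhd y t → Lhd j t

/-- `T` is join-irreducible: it covers exactly one element. -/
def JoinIrr (T : FB n) : Prop := ∃! S : FB n, CovRel S T

/-- `T` is meet-irreducible: it is covered by exactly one element. -/
def MeetIrr (T : FB n) : Prop := ∃! S : FB n, CovRel T S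

/-- A strict chain `f 0 ⊲ f 1 ⊲ ⋯ ⊲ f m` of length `m`. -/
def IsStrictChain {m : ℕ} (f : Fin (m + 1) → FB n) : Prop :=
  ∀ i j : Fin (m + 1), i < j → Lhd (f i) (f j) ∧ f i ≠ f j

/-- `T` is small: every cell of `T` other than the root is an arrow. -/
def IsSmall (T : FB n) : Prop :=
  ∀ c ∈ T.cells, c ≠ root n → IsLeftArrow T c ∨ IsUpArrow T c

/-- `T` is binary: `T` has no free cells. -/
def IsBinary (T : FB n) : Prop := ∀ c : Cell, ¬ IsFree T c

/-- `c` lies strictly above the up-arrow of `T` in its column. -/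
def PointedUp (T : FB n) (c : Cell) : Prop :=
  ∃ i', c.1 < i' ∧ IsUpArrow T (i', c.2)

/-- `c` is pointed by a left-arrow of `T`: it lies strictly to the left of the
left-arrow of `T` in its row. -/
def PointedLeft (T : FB n) (c : Cell) : Prop :=
  ∃ j', j' < c.2 ∧ IsLeftArrow T (c.1, j')

end EsTam

namespace EsTam

variable {n : ℕ}

/-- Column of the left-arrow of row `i` (the largest column of a dot in row `i`). -/
noncomputable def la (T : FB n) (i : ℕ) : ℕ := sSup {j | ((i, j) : Cell) ∈ T.cells}

/-- Row of the up-arrow of column `j` (the smallest row of a dot in column `j`). -/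
noncomputable def ua (T : FB n) (j : ℕ) : ℕ := sInf {i | ((i, j) : Cell) ∈ T.cells}

lemma row_bddAbove (T : FB n) (i : ℕ) : BddAbove {j | ((i, j) : Cell) ∈ T.cells} :=
  ⟨n, fun j hj => (T.isCell_of_mem _ hj).2.2.2.1⟩

lemma la_max (T : FB n) {i j : ℕ} (h : ((i, j) : Cell) ∈ T.cells) : j ≤ la T i :=
  le_csSup (row_bddAbove T i) h

lemma la_mem' (T : FB n) {i : ℕ} (h : ∃ j, ((i, j) : Cell) ∈ T.cells) :
    ((i, la T i) : Cell) ∈ T.cells :=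
  Nat.sSup_mem h (row_bddAbove T i)

lemma border_isBorder {i : ℕ} (h2 : 2 ≤ i) (h3 : i ≤ n) : IsBorder n ((i, i - 1) : Cell) :=
  ⟨h2, h3, rfl⟩

lemma la_mem (T : FB n) {i : ℕ} (h2 : 2 ≤ i) (h3 : i ≤ n) :
    ((i, la T i) : Cell) ∈ T.cells :=
  la_mem' T ⟨i - 1, T.border_mem _ (border_isBorder h2 h3)⟩

lemma la_lb (T : FB n) {i : ℕ} (h2 : 2 ≤ i) (h3 : i ≤ n) : i - 1 ≤ la T i :=
  la_max T (T.border_mem _ (border_isBorder h2 h3))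

lemma la_le (T : FB n) {i : ℕ} (h2 : 2 ≤ i) (h3 : i ≤ n) : la T i ≤ n :=
  (T.isCell_of_mem _ (la_mem T h2 h3)).2.2.2.1

lemma ua_le (T : FB n) {i j : ℕ} (h : ((i, j) : Cell) ∈ T.cells) : ua T j ≤ i :=
  Nat.sInf_le h

lemma ua_mem' (T : FB n) {j : ℕ} (h : ∃ i, ((i, j) : Cell) ∈ T.cells) :
    ((ua T j, j) : Cell) ∈ T.cells :=
  Nat.sInf_mem h

lemma ua_mem (T : FB n) {j : ℕ} (h1 : 1 ≤ j) (h2 : j < n) :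
    ((ua T j, j) : Cell) ∈ T.cells :=
  ua_mem' T ⟨j + 1, T.border_mem _ ⟨by omega, by omega, by simp⟩⟩

lemma ua_le_succ (T : FB n) {j : ℕ} (h1 : 1 ≤ j) (h2 : j < n) : ua T j ≤ j + 1 :=
  ua_le T (T.border_mem _ ⟨by omega, by omega, by simp⟩)

lemma ua_pos (T : FB n) {j : ℕ} (h1 : 1 ≤ j) (h2 : j < n) : 1 ≤ ua T j :=
  (T.isCell_of_mem _ (ua_mem T h1 h2)).1

lemma ua_le_n (T : FB n) {j : ℕ} (h1 : 1 ≤ j) (h2 : j < n) : ua T j ≤ n :=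
  (T.isCell_of_mem _ (ua_mem T h1 h2)).2.1

lemma isLeftArrow_la (T : FB n) {i : ℕ} (h2 : 2 ≤ i) (h3 : i ≤ n) :
    IsLeftArrow T ((i, la T i) : Cell) := by
  refine ⟨la_mem T h2 h3, ?_, ?_⟩
  · intro h; apply absurd (congrArg Prod.fst h); simp [root]; omega
  · intro j' hj' hmem
    exact absurd (la_max T hmem) (by simpa using hj'.not_ge)

lemma isUpArrow_ua (T : FB n) {j : ℕ} (h1 : 1 ≤ j) (h2 : j < n) :
    IsUpArrow T ((ua T j, j) : Cell) := by
  refine ⟨ua_mem T h1 h2, ?_, ?_⟩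
  · intro h; apply absurd (congrArg Prod.snd h); simp [root]; omega
  · intro i' hi' hmem
    exact absurd (ua_le T hmem) (by simpa using hi'.not_ge)

lemma IsLeftArrow.col {T : FB n} {c : Cell} (h : IsLeftArrow T c) : c.2 = la T c.1 := by
  refine le_antisymm (la_max T (by simpa using h.1)) ?_
  by_contra hlt
  push_neg at hlt
  exact h.2.2 _ hlt (la_mem' T ⟨c.2, by simpa using h.1⟩)

lemma IsUpArrow.row {T : FB n} {c : Cell} (h : IsUpArrow T c) : c.1 = ua T c.2 := by
  refine le_antisymm ?_ (ua_le T (by simpa using h.1))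
  by_contra hlt
  push_neg at hlt
  exact h.2.2 _ hlt (ua_mem' T ⟨c.1, by simpa using h.1⟩)

lemma IsLeftArrow.row_ge {T : FB n} {c : Cell} (h : IsLeftArrow T c) : 2 ≤ c.1 := by
  obtain ⟨a1, a2, a3, a4, a5⟩ := T.isCell_of_mem _ h.1
  rcases Nat.lt_or_ge c.1 2 with h1 | h1
  · exfalso
    have hc1 : c.1 = 1 := by omega
    have hc2 : c.2 < n := by
      rcases Nat.lt_or_ge c.2 n with h' | h'
      · exact h'
      · exfalso
        apply h.2.1
        have hc2' : c.2 = n := by omega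
        simp only [root, Prod.ext_iff]
        exact ⟨hc1, hc2'⟩
    exact h.2.2 n hc2 (by rw [hc1]; exact T.root_mem)
  · exact h1

lemma IsUpArrow.col_lt {T : FB n} {c : Cell} (h : IsUpArrow T c) : c.2 < n := by
  obtain ⟨a1, a2, a3, a4, a5⟩ := T.isCell_of_mem _ h.1
  rcases Nat.lt_or_ge c.2 n with h' | h'
  · exact h'
  · exfalso
    have hc2 : c.2 = n := by omega
    rcases Nat.lt_or_ge 1 c.1 with h1 | h1
    · exact h.2.2 1 h1 (by rw [hc2]; exact T.root_mem)
    · apply h.2.1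
      simp only [root, Prod.ext_iff]
      omega

lemma IsUpArrow.col_pos {T : FB n} {c : Cell} (h : IsUpArrow T c) : 1 ≤ c.2 :=
  (T.isCell_of_mem _ h.1).2.2.1

lemma root_not_free (T : FB n) : ¬ IsFree T (root n) := by
  rintro ⟨_, _, j', hj', hl⟩
  have := (T.isCell_of_mem _ hl.1).2.2.2.1
  simp [root] at hj' this
  omega

lemma IsLeftArrow.not_free {T : FB n} {c : Cell} (h : IsLeftArrow T c) : ¬ IsFree T c := by
  rintro ⟨_, _, j', hj', hl⟩
  have h1 := h.col
  have h2 := hl.col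
  simp at h2
  omega

lemma IsUpArrow.not_free {T : FB n} {c : Cell} (h : IsUpArrow T c) : ¬ IsFree T c := by
  rintro ⟨_, ⟨i', hi', hu⟩, _⟩
  have h1 := h.row
  have h2 := hu.row
  simp at h2
  omega
lemma IsFree.ua_lt {T : FB n} {c : Cell} (h : IsFree T c) : ua T c.2 < c.1 := by
  obtain ⟨_, ⟨i', hi', hu⟩, _⟩ := h
  have := hu.row
  simp at this
  omega

lemma IsFree.lt_la {T : FB n} {c : Cell} (h : IsFree T c) : c.2 < la T c.1 := by
  obtain ⟨_, _, ⟨j', hj', hl⟩⟩ := h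
  have := hl.col
  simp at this
  omega

lemma IsFree.col_lt {T : FB n} {c : Cell} (h : IsFree T c) : c.2 < n := by
  obtain ⟨_, ⟨i', hi', hu⟩, _⟩ := h
  have := hu.col_lt
  simpa using this

lemma IsFree.row_ge {T : FB n} {c : Cell} (h : IsFree T c) : 2 ≤ c.1 := by
  obtain ⟨_, _, ⟨j', hj', hl⟩⟩ := h
  have := hl.row_ge
  simpa using this

lemma isFree_mk (T : FB n) {c : Cell} (hc : IsCell n c) (h1 : 2 ≤ c.1) (h2 : c.2 < n)
    (h3 : ua T c.2 < c.1) (h4 : c.2 < la T c.1) : IsFree T c :=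
  ⟨hc, ⟨ua T c.2, h3, isUpArrow_ua T hc.2.2.1 h2⟩,
    ⟨la T c.1, h4, isLeftArrow_la T h1 hc.2.1⟩⟩

lemma mem_cases {T : FB n} {c : Cell} (h : c ∈ T.cells) :
    c = root n ∨ IsLeftArrow T c ∨ IsUpArrow T c ∨ IsFree T c := by
  by_cases hr : c = root n
  · exact Or.inl hr
  by_cases hl : IsLeftArrow T c
  · exact Or.inr (Or.inl hl)
  by_cases hu : IsUpArrow T c
  · exact Or.inr (Or.inr (Or.inl hu))
  refine Or.inr (Or.inr (Or.inr ?_))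
  obtain ⟨a1, a2, a3, a4, a5⟩ := T.isCell_of_mem _ h
  have hL : ∃ j', c.2 < j' ∧ ((c.1, j') : Cell) ∈ T.cells := by
    by_contra hno
    push_neg at hno
    exact hl ⟨h, hr, fun j' hj' => hno j' hj'⟩
  obtain ⟨j', hj', hmj⟩ := hL
  have hU : ∃ i', i' < c.1 ∧ ((i', c.2) : Cell) ∈ T.cells := by
    by_contra hno
    push_neg at hno
    exact hu ⟨h, hr, fun i' hi' => hno i' hi'⟩
  obtain ⟨i', hi', hmi⟩ := hU
  have hc2n : c.2 < n := by
    have := (T.isCell_of_mem _ hmj).2.2.2.1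
    simp at this
    omega
  have hi2 : 2 ≤ c.1 := by
    have := (T.isCell_of_mem _ hmi).1
    simp at this
    omega
  refine isFree_mk T ⟨a1, a2, a3, a4, a5⟩ hi2 hc2n ?_ ?_
  · exact lt_of_le_of_lt (ua_le T hmi) hi'
  · exact lt_of_lt_of_le hj' (la_max T hmj)
lemma rowSp_subset_iff (S T : FB n) :
    RowSp T ⊆ RowSp S ↔ ∀ i, 2 ≤ i → i ≤ n → la T i ≤ la S i := by
  constructor
  · intro h i h2 h3
    have hmem : ((i, la T i) : Cell) ∈ RowSp T :=
      ⟨T.isCell_of_mem _ (la_mem T h2 h3), la T i, le_refl _,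
        Or.inr (by simpa using isLeftArrow_la T h2 h3)⟩
    obtain ⟨_, j', hj', hor⟩ := h hmem
    rcases hor with hroot | hla
    · exfalso
      have : i = 1 := congrArg Prod.fst hroot
      omega
    · have := hla.col
      simp at this hj'
      omega
  · intro h c hc
    obtain ⟨hcell, j', hj', hor⟩ := hc
    rcases hor with hroot | hla
    · have h1 : c.1 = 1 := congrArg Prod.fst hroot
      exact ⟨hcell, n, hcell.2.2.2.1, Or.inl (by rw [h1]; rfl)⟩
    · have h2 : 2 ≤ c.1 := by simpa using hla.row_ge
      have h3 : c.1 ≤ n := hcell.2.1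
      have hcol := hla.col
      simp at hcol
      refine ⟨hcell, la S c.1, ?_, Or.inr (isLeftArrow_la S h2 h3)⟩
      have := h c.1 h2 h3
      omega

lemma colSp_subset_iff (S T : FB n) :
    ColSp S ⊆ ColSp T ↔ ∀ j, 1 ≤ j → j < n → ua T j ≤ ua S j := by
  constructor
  · intro h j h1 h2
    have hmem : ((ua S j, j) : Cell) ∈ ColSp S :=
      ⟨S.isCell_of_mem _ (ua_mem S h1 h2), ua S j, le_refl _,
        Or.inr (by simpa using isUpArrow_ua S h1 h2)⟩
    obtain ⟨_, i', hi', hor⟩ := h hmem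
    rcases hor with hroot | hua
    · exfalso
      have : j = n := congrArg Prod.snd hroot
      omega
    · have := hua.row
      simp at this hi'
      omega
  · intro h c hc
    obtain ⟨hcell, i', hi', hor⟩ := hc
    rcases hor with hroot | hua
    · have h2 : c.2 = n := congrArg Prod.snd hroot
      exact ⟨hcell, 1, hcell.1, Or.inl (by rw [h2]; rfl)⟩
    · have h1 : 1 ≤ c.2 := by simpa using hua.col_pos
      have h2 : c.2 < n := by simpa using hua.col_lt
      have hrow := hua.row
      simp at hrow
      refine ⟨hcell, ua T c.2, ?_, Or.inr (isUpArrow_ua T h1 h2)⟩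
      have := h c.2 h1 h2
      omega

lemma lhd_ua {S T : FB n} (h : Lhd S T) {j : ℕ} (h1 : 1 ≤ j) (h2 : j < n) :
    ua T j ≤ ua S j :=
  (colSp_subset_iff S T).1 h.1 j h1 h2

lemma lhd_la {S T : FB n} (h : Lhd S T) {i : ℕ} (h2 : 2 ≤ i) (h3 : i ≤ n) :
    la T i ≤ la S i :=
  (rowSp_subset_iff S T).1 h.2.1 i h2 h3

lemma ua_supp (T : FB n) {j : ℕ} (h1 : 1 ≤ j) (h2 : j < n) (h : 2 ≤ ua T j) :
    j < la T (ua T j) := by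
  have hmem := ua_mem T h1 h2
  have hne : ((ua T j, j) : Cell) ≠ root n := by
    simp only [root, ne_eq, Prod.mk.injEq, not_and]
    omega
  rcases T.supported _ hmem hne with ⟨j', hj', hm⟩ | ⟨i', hi', hm⟩
  · simp at hj' hm
    exact lt_of_lt_of_le hj' (la_max T hm)
  · exfalso
    simp at hi' hm
    exact absurd (ua_le T hm) (by omega)

lemma la_supp (T : FB n) {i : ℕ} (h2 : 2 ≤ i) (h3 : i ≤ n) :
    ua T (la T i) < i := by
  have hmem := la_mem T h2 h3
  have hne : ((i, la T i) : Cell) ≠ root n := by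
    simp only [root, ne_eq, Prod.mk.injEq, not_and]
    omega
  rcases T.supported _ hmem hne with ⟨j', hj', hm⟩ | ⟨i', hi', hm⟩
  · exfalso
    simp at hj' hm
    exact absurd (la_max T hm) (by omega)
  · simp at hi' hm
    exact lt_of_le_of_lt (ua_le T hm) hi'

lemma IsSmall.not_free {T : FB n} (hs : IsSmall T) {c : Cell} (hc : c ∈ T.cells) :
    ¬ IsFree T c := by
  by_cases hr : c = root n
  · rw [hr]; exact root_not_free T
  rcases hs c hc hr with hl | hu
  · exact hl.not_free
  · exact hu.not_free

lemma IsSmall.border_up {M : FB n} (hs : IsSmall M) {i : ℕ} (h2 : 2 ≤ i) (h3 : i ≤ n)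
    (h : la M i ≠ i - 1) : ua M (i - 1) = i := by
  have hmem : ((i, i - 1) : Cell) ∈ M.cells := M.border_mem _ (border_isBorder h2 h3)
  have hne : ((i, i - 1) : Cell) ≠ root n := by
    simp only [root, ne_eq, Prod.mk.injEq, not_and]
    omega
  rcases hs _ hmem hne with hl | hu
  · exfalso
    have := hl.col
    simp at this
    omega
  · have := hu.row
    simp at this
    omega

lemma FB.ext' {S T : FB n} (h : S.cells = T.cells) : S = T := by
  cases S; cases T
  simp only at h
  subst h
  rfl

lemma cells_subset_of_arrows_eq {S T : FB n} (h : Lhd S T)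
    (hua : ∀ j, 1 ≤ j → j < n → ua S j = ua T j)
    (hla : ∀ i, 2 ≤ i → i ≤ n → la S i = la T i) : S.cells ⊆ T.cells := by
  intro c hc
  rcases mem_cases hc with hr | hl | hu | hf
  · rw [hr]; exact T.root_mem
  · have h2 : 2 ≤ c.1 := hl.row_ge
    have h3 : c.1 ≤ n := (S.isCell_of_mem _ hl.1).2.1
    have hcol := hl.col
    have hc' : c = ((c.1, la T c.1) : Cell) := by
      rw [← hla c.1 h2 h3, ← hcol]
    rw [hc']
    exact la_mem T h2 h3
  · have h1 : 1 ≤ c.2 := hu.col_pos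
    have h2 : c.2 < n := hu.col_lt
    have hrow := hu.row
    have hc' : c = ((ua T c.2, c.2) : Cell) := by
      rw [← hua c.2 h1 h2, ← hrow]
    rw [hc']
    exact ua_mem T h1 h2
  · have hcell : IsCell n c := hf.1
    have hfT : IsFree T c := by
      refine isFree_mk T hcell hf.row_ge hf.col_lt ?_ ?_
      · rw [← hua c.2 hcell.2.2.1 hf.col_lt]
        exact hf.ua_lt
      · rw [← hla c.1 hf.row_ge hcell.2.1]
        exact hf.lt_la
    exact h.2.2 c hf hfT hc

lemma lhd_antisymm {S T : FB n} (h1 : Lhd S T) (h2 : Lhd T S) : S = T := by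
  have hua : ∀ j, 1 ≤ j → j < n → ua S j = ua T j := fun j hj1 hj2 =>
    le_antisymm (lhd_ua h2 hj1 hj2) (lhd_ua h1 hj1 hj2)
  have hla : ∀ i, 2 ≤ i → i ≤ n → la S i = la T i := fun i hi1 hi2 =>
    le_antisymm (lhd_la h2 hi1 hi2) (lhd_la h1 hi1 hi2)
  refine FB.ext' (Set.Subset.antisymm ?_ ?_)
  · exact cells_subset_of_arrows_eq h1 hua hla
  · exact cells_subset_of_arrows_eq h2 (fun j a b => (hua j a b).symm)
      (fun i a b => (hla i a b).symm)
section Meet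

variable (M N : FB n)

/-- Row positions of up-arrows of the meet. -/
noncomputable def mU (j : ℕ) : ℕ := max (ua M j) (ua N j)

/-- Max of the left-arrow columns. -/
noncomputable def mL (i : ℕ) : ℕ := max (la M i) (la N i)

/-- Column positions of left-arrows of the meet. -/
noncomputable def ml (i : ℕ) : ℕ := sInf {j | mL M N i ≤ j ∧ (j = n ∨ mU M N j < i)}

variable {M N}

lemma ml_spec {i : ℕ} (h2 : 2 ≤ i) (h3 : i ≤ n) :
    mL M N i ≤ ml M N i ∧ (ml M N i = n ∨ mU M N (ml M N i) < i) := by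
  have hne : {j | mL M N i ≤ j ∧ (j = n ∨ mU M N j < i)}.Nonempty :=
    ⟨n, max_le (la_le M h2 h3) (la_le N h2 h3), Or.inl rfl⟩
  exact Nat.sInf_mem hne

lemma ml_le {i j : ℕ} (ha : mL M N i ≤ j) (hb : j = n ∨ mU M N j < i) :
    ml M N i ≤ j :=
  Nat.sInf_le ⟨ha, hb⟩

lemma ml_le_n {i : ℕ} (h2 : 2 ≤ i) (h3 : i ≤ n) : ml M N i ≤ n :=
  ml_le (max_le (la_le M h2 h3) (la_le N h2 h3)) (Or.inl rfl)

lemma mL_lb {i : ℕ} (h2 : 2 ≤ i) (h3 : i ≤ n) : i - 1 ≤ mL M N i :=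
  le_trans (la_lb M h2 h3) (le_max_left _ _)

lemma ml_lb {i : ℕ} (h2 : 2 ≤ i) (h3 : i ≤ n) : i - 1 ≤ ml M N i :=
  le_trans (mL_lb h2 h3) (ml_spec h2 h3).1

lemma mU_le {j : ℕ} (h1 : 1 ≤ j) (h2 : j < n) : mU M N j ≤ j + 1 :=
  max_le (ua_le_succ M h1 h2) (ua_le_succ N h1 h2)

lemma mU_le_n {j : ℕ} (h1 : 1 ≤ j) (h2 : j < n) : mU M N j ≤ n :=
  max_le (ua_le_n M h1 h2) (ua_le_n N h1 h2)

variable (M N)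

/-- The cells of the meet of two small fb-tableaux. -/
def meetCells : Set Cell :=
  {c | c = root n ∨ (∃ j, 1 ≤ j ∧ j < n ∧ c = ((mU M N j, j) : Cell)) ∨
    (∃ i, 2 ≤ i ∧ i ≤ n ∧ c = ((i, ml M N i) : Cell))}

variable {M N}

lemma mem_meetCells {c : Cell} :
    c ∈ meetCells M N ↔ (c = root n ∨
      (∃ j, 1 ≤ j ∧ j < n ∧ c = ((mU M N j, j) : Cell)) ∨
      (∃ i, 2 ≤ i ∧ i ≤ n ∧ c = ((i, ml M N i) : Cell))) := Iff.rfl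

/-- The meet of two small fb-tableaux, as an fb-tableau. -/
noncomputable def meetFB (hn : 1 ≤ n) (M N : FB n) (hM : IsSmall M) (hN : IsSmall N) :
    FB n where
  cells := meetCells M N
  isCell_of_mem := by
    intro c hc
    rcases mem_meetCells.1 hc with hr | ⟨j, hj1, hj2, rfl⟩ | ⟨i, hi1, hi2, rfl⟩
    · rw [hr]
      exact ⟨le_refl _, hn, hn, le_refl _, Or.inl (by norm_num [root])⟩
    · rcases max_choice (ua M j) (ua N j) with h | h
      · rw [show mU M N j = ua M j from h]
        exact M.isCell_of_mem _ (ua_mem M hj1 hj2)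
      · rw [show mU M N j = ua N j from h]
        exact N.isCell_of_mem _ (ua_mem N hj1 hj2)
    · have hml1 := ml_lb (M := M) (N := N) hi1 hi2
      have hml2 := ml_le_n (M := M) (N := N) hi1 hi2
      exact ⟨by omega, hi2, by omega, hml2, Or.inr (by omega)⟩
  root_mem := Or.inl rfl
  border_mem := by
    rintro ⟨i, j⟩ ⟨hb1, hb2, hb3⟩
    simp only at hb1 hb2 hb3
    subst hb3
    by_cases h : ml M N i = i - 1
    · exact Or.inr (Or.inr ⟨i, hb1, hb2, by rw [h]⟩)
    · have hub : mU M N (i - 1) ≤ i :=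
        max_le (ua_le M (M.border_mem _ (border_isBorder hb1 hb2)))
          (ua_le N (N.border_mem _ (border_isBorder hb1 hb2)))
      have hlow : i ≤ mU M N (i - 1) := by
        rcases Nat.lt_or_ge (i - 1) (mL M N i) with hB | hA
        · -- some left-arrow strictly right of the border: border cell is an up-arrow there
          rcases Nat.lt_or_ge (i - 1) (la M i) with hM' | hM'
          · have hbu := hM.border_up hb1 hb2 (by omega)
            have hle : ua M (i - 1) ≤ mU M N (i - 1) := le_max_left _ _
            omega
          · have hN' : i - 1 < la N i := by
              have hmax : mL M N i = max (la M i) (la N i) := rfl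
              rcases max_choice (la M i) (la N i) with hh | hh <;> rw [hmax, hh] at hB <;> omega
            have hbu := hN.border_up hb1 hb2 (by omega)
            have hle : ua N (i - 1) ≤ mU M N (i - 1) := le_max_right _ _
            omega
        · -- mL i = i - 1 but ml i ≠ i - 1 : i - 1 is not in the defining set
          by_contra hcon
          push_neg at hcon
          have h1 : ml M N i ≤ i - 1 := ml_le hA (Or.inr hcon)
          have h2 := ml_lb (M := M) (N := N) hb1 hb2
          exact h (by omega)
      refine Or.inr (Or.inl ⟨i - 1, by omega, by omega, ?_⟩)
      have : i = mU M N (i - 1) := by omega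
      rw [← this]
  supported := by
    intro c hc hne
    rcases mem_meetCells.1 hc with hr | ⟨j, hj1, hj2, rfl⟩ | ⟨i, hi1, hi2, rfl⟩
    · exact absurd hr hne
    · rcases Nat.lt_or_ge (mU M N j) 2 with h1 | h1
      · -- mU j = 1 : the root is strictly to the left
        have hmu : 1 ≤ mU M N j :=
          le_trans (ua_pos M hj1 hj2) (le_max_left _ _)
        refine Or.inl ⟨n, by simpa using hj2, ?_⟩
        have : mU M N j = 1 := by omega
        simp only [this]
        exact Or.inl rfl
      · -- the left-arrow of row mU j is strictly to the right of column j
        have hun : mU M N j ≤ n := mU_le_n hj1 hj2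
        refine Or.inl ⟨ml M N (mU M N j), ?_, Or.inr (Or.inr ⟨mU M N j, h1, hun, rfl⟩)⟩
        show j < ml M N (mU M N j)
        have hmm : mU M N j = max (ua M j) (ua N j) := rfl
        rcases max_choice (ua M j) (ua N j) with h | h
        · rw [hmm, h] at h1 hun ⊢
          have hsup := ua_supp M hj1 hj2 h1
          have hle : la M (ua M j) ≤ mL M N (ua M j) := le_max_left _ _
          have hml := (ml_spec (M := M) (N := N) h1 hun).1
          omega
        · rw [hmm, h] at h1 hun ⊢
          have hsup := ua_supp N hj1 hj2 h1
          have hle : la N (ua N j) ≤ mL M N (ua N j) := le_max_right _ _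
          have hml := (ml_spec (M := M) (N := N) h1 hun).1
          omega
    · by_cases hmn : ml M N i = n
      · refine Or.inr ⟨1, by omega, ?_⟩
        simp only [hmn]
        exact Or.inl rfl
      · have hlt : mU M N (ml M N i) < i := by
          rcases (ml_spec (M := M) (N := N) hi1 hi2).2 with h | h
          · exact absurd h hmn
          · exact h
        refine Or.inr ⟨mU M N (ml M N i), hlt, ?_⟩
        have hml1 := ml_lb (M := M) (N := N) hi1 hi2
        have hml2 := ml_le_n (M := M) (N := N) hi1 hi2
        exact Or.inr (Or.inl ⟨ml M N i, by omega, by omega, rfl⟩)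

end Meet
section MeetLemmas

variable (hn : 1 ≤ n) {M N : FB n} (hM : IsSmall M) (hN : IsSmall N)

lemma mem_meetFB_mU {j : ℕ} (h1 : 1 ≤ j) (h2 : j < n) :
    ((mU M N j, j) : Cell) ∈ (meetFB hn M N hM hN).cells :=
  Or.inr (Or.inl ⟨j, h1, h2, rfl⟩)

lemma mem_meetFB_ml {i : ℕ} (h2 : 2 ≤ i) (h3 : i ≤ n) :
    ((i, ml M N i) : Cell) ∈ (meetFB hn M N hM hN).cells :=
  Or.inr (Or.inr ⟨i, h2, h3, rfl⟩)

lemma ua_meetFB {j : ℕ} (h1 : 1 ≤ j) (h2 : j < n) :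
    ua (meetFB hn M N hM hN) j = mU M N j := by
  refine le_antisymm (ua_le _ (mem_meetFB_mU hn hM hN h1 h2)) ?_
  have hm := ua_mem (meetFB hn M N hM hN) h1 h2
  rcases mem_meetCells.1 hm with hr | ⟨j', hj1, hj2, heq⟩ | ⟨i, hi1, hi2, heq⟩
  · exfalso
    have : j = n := congrArg Prod.snd hr
    omega
  · have e1 : ua (meetFB hn M N hM hN) j = mU M N j' := congrArg Prod.fst heq
    have e2 : j = j' := congrArg Prod.snd heq
    subst e2
    omega
  · have e1 : ua (meetFB hn M N hM hN) j = i := congrArg Prod.fst heq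
    have e2 : j = ml M N i := congrArg Prod.snd heq
    rcases (ml_spec (M := M) (N := N) hi1 hi2).2 with h | h
    · omega
    · rw [← e2] at h
      omega

lemma la_meetFB {i : ℕ} (h2 : 2 ≤ i) (h3 : i ≤ n) :
    la (meetFB hn M N hM hN) i = ml M N i := by
  refine le_antisymm ?_ (la_max _ (mem_meetFB_ml hn hM hN h2 h3))
  have hm := la_mem (meetFB hn M N hM hN) h2 h3
  rcases mem_meetCells.1 hm with hr | ⟨j, hj1, hj2, heq⟩ | ⟨i', hi1, hi2, heq⟩
  · exfalso
    have : i = 1 := congrArg Prod.fst hr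
    omega
  · have e1 : i = mU M N j := congrArg Prod.fst heq
    have e2 : la (meetFB hn M N hM hN) i = j := congrArg Prod.snd heq
    have hun : mU M N j ≤ n := by omega
    have h1' : 2 ≤ mU M N j := by omega
    have hmm : mU M N j = max (ua M j) (ua N j) := rfl
    have hml : j < ml M N (mU M N j) := by
      rcases max_choice (ua M j) (ua N j) with h | h
      · rw [hmm, h] at h1' hun ⊢
        have hsup := ua_supp M hj1 hj2 h1'
        have hle : la M (ua M j) ≤ mL M N (ua M j) := le_max_left _ _
        have hml := (ml_spec (M := M) (N := N) h1' hun).1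
        omega
      · rw [hmm, h] at h1' hun ⊢
        have hsup := ua_supp N hj1 hj2 h1'
        have hle : la N (ua N j) ≤ mL M N (ua N j) := le_max_right _ _
        have hml := (ml_spec (M := M) (N := N) h1' hun).1
        omega
    rw [← e1] at hml
    omega
  · have e1 : i = i' := congrArg Prod.fst heq
    have e2 : la (meetFB hn M N hM hN) i = ml M N i' := congrArg Prod.snd heq
    rw [← e1] at e2
    omega

lemma meetFB_small : IsSmall (meetFB hn M N hM hN) := by
  intro c hc hne
  rcases mem_meetCells.1 hc with hr | ⟨j, hj1, hj2, rfl⟩ | ⟨i, hi1, hi2, rfl⟩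
  · exact absurd hr hne
  · right
    have := isUpArrow_ua (meetFB hn M N hM hN) hj1 hj2
    rwa [ua_meetFB hn hM hN hj1 hj2] at this
  · left
    have := isLeftArrow_la (meetFB hn M N hM hN) hi1 hi2
    rwa [la_meetFB hn hM hN hi1 hi2] at this

lemma meetFB_lhd (T : FB n) (hT : IsSmall T) (h1 : ∀ j, 1 ≤ j → j < n → ua T j ≤ mU M N j)
    (h2 : ∀ i, 2 ≤ i → i ≤ n → la T i ≤ ml M N i) :
    Lhd (meetFB hn M N hM hN) T := by
  refine ⟨?_, ?_, ?_⟩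
  · rw [colSp_subset_iff]
    intro j hj1 hj2
    rw [ua_meetFB hn hM hN hj1 hj2]
    exact h1 j hj1 hj2
  · rw [rowSp_subset_iff]
    intro i hi1 hi2
    rw [la_meetFB hn hM hN hi1 hi2]
    exact h2 i hi1 hi2
  · intro c hf hfT hc
    exact absurd hf ((meetFB_small hn hM hN).not_free hc)

lemma meetFB_lhd_left : Lhd (meetFB hn M N hM hN) M := by
  refine meetFB_lhd hn hM hN M hM ?_ ?_
  · intro j hj1 hj2
    exact le_max_left _ _
  · intro i hi1 hi2
    exact le_trans (le_max_left _ _) (ml_spec (M := M) (N := N) hi1 hi2).1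

lemma meetFB_lhd_right : Lhd (meetFB hn M N hM hN) N := by
  refine meetFB_lhd hn hM hN N hN ?_ ?_
  · intro j hj1 hj2
    exact le_max_right _ _
  · intro i hi1 hi2
    exact le_trans (le_max_right _ _) (ml_spec (M := M) (N := N) hi1 hi2).1

lemma meetFB_glb (t : FB n) (htM : Lhd t M) (htN : Lhd t N) :
    Lhd t (meetFB hn M N hM hN) := by
  refine ⟨?_, ?_, ?_⟩
  · rw [colSp_subset_iff]
    intro j hj1 hj2
    rw [ua_meetFB hn hM hN hj1 hj2]
    exact max_le (lhd_ua htM hj1 hj2) (lhd_ua htN hj1 hj2)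
  · rw [rowSp_subset_iff]
    intro i hi1 hi2
    rw [la_meetFB hn hM hN hi1 hi2]
    refine ml_le (max_le (lhd_la htM hi1 hi2) (lhd_la htN hi1 hi2)) ?_
    by_cases hln : la t i = n
    · exact Or.inl hln
    · have h4 : la t i < n := lt_of_le_of_ne (la_le t hi1 hi2) hln
      have h5 : 1 ≤ la t i := by
        have := la_lb t hi1 hi2
        omega
      refine Or.inr (lt_of_le_of_lt
        (max_le (lhd_ua htM h5 h4) (lhd_ua htN h5 h4)) (la_supp t hi1 hi2))
  · intro c hft hfP hct
    exfalso
    have hcell := hft.1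
    have h2c : 2 ≤ c.1 := hft.row_ge
    have h3c : c.1 ≤ n := hcell.2.1
    have hcol1 : 1 ≤ c.2 := hcell.2.2.1
    have hcoln : c.2 < n := hft.col_lt
    have hMla : la M c.1 ≤ c.2 := by
      by_contra hlt
      push_neg at hlt
      have hfM : IsFree M c := isFree_mk M hcell h2c hcoln
        (lt_of_le_of_lt (lhd_ua htM hcol1 hcoln) hft.ua_lt) hlt
      exact (hM.not_free (htM.2.2 c hft hfM hct)) hfM
    have hNla : la N c.1 ≤ c.2 := by
      by_contra hlt
      push_neg at hlt
      have hfN : IsFree N c := isFree_mk N hcell h2c hcoln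
        (lt_of_le_of_lt (lhd_ua htN hcol1 hcoln) hft.ua_lt) hlt
      exact (hN.not_free (htN.2.2 c hft hfN hct)) hfN
    have hmu : mU M N c.2 < c.1 := by
      have := hfP.ua_lt
      rwa [ua_meetFB hn hM hN hcol1 hcoln] at this
    have h6 : ml M N c.1 ≤ c.2 := ml_le (max_le hMla hNla) (Or.inr hmu)
    have h7 : c.2 < la (meetFB hn M N hM hN) c.1 := hfP.lt_la
    rw [la_meetFB hn hM hN h2c h3c] at h7
    omega

lemma meetFB_isMeet : IsMeet M N (meetFB hn M N hM hN) :=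
  ⟨meetFB_lhd_left hn hM hN, meetFB_lhd_right hn hM hN,
    fun t htM htN => meetFB_glb hn hM hN t htM htN⟩

lemma meetFB_binary (hMb : IsBinary M) (hNb : IsBinary N) :
    IsBinary (meetFB hn M N hM hN) := by
  intro c hf
  have hcell := hf.1
  have h2c : 2 ≤ c.1 := hf.row_ge
  have h3c : c.1 ≤ n := hcell.2.1
  have hcol1 : 1 ≤ c.2 := hcell.2.2.1
  have hcoln : c.2 < n := hf.col_lt
  have hmu : mU M N c.2 < c.1 := by
    have := hf.ua_lt
    rwa [ua_meetFB hn hM hN hcol1 hcoln] at this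
  have hml : c.2 < ml M N c.1 := by
    have := hf.lt_la
    rwa [la_meetFB hn hM hN h2c h3c] at this
  have hMla : la M c.1 ≤ c.2 := by
    by_contra hlt
    push_neg at hlt
    exact hMb c (isFree_mk M hcell h2c hcoln
      (lt_of_le_of_lt (le_max_left _ _) hmu) hlt)
  have hNla : la N c.1 ≤ c.2 := by
    by_contra hlt
    push_neg at hlt
    exact hNb c (isFree_mk N hcell h2c hcoln
      (lt_of_le_of_lt (le_max_right _ _) hmu) hlt)
  have h6 : ml M N c.1 ≤ c.2 := ml_le (max_le hMla hNla) (Or.inr hmu)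
  omega

end MeetLemmas
section Join

variable (M N : FB n)

/-- Min of the up-arrow rows. -/
noncomputable def jU (j : ℕ) : ℕ := min (ua M j) (ua N j)

/-- Column positions of left-arrows of the join. -/
noncomputable def jL (i : ℕ) : ℕ := min (la M i) (la N i)

/-- Row positions of up-arrows of the join. -/
noncomputable def ju (j : ℕ) : ℕ := sSup {i | i ≤ jU M N j ∧ (i = 1 ∨ j < jL M N i)}

variable {M N}

lemma ju_bdd (j : ℕ) : BddAbove {i | i ≤ jU M N j ∧ (i = 1 ∨ j < jL M N i)} :=
  ⟨jU M N j, fun _ hi => hi.1⟩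

lemma jU_pos {j : ℕ} (h1 : 1 ≤ j) (h2 : j < n) : 1 ≤ jU M N j :=
  le_min (ua_pos M h1 h2) (ua_pos N h1 h2)

lemma jU_le_succ {j : ℕ} (h1 : 1 ≤ j) (h2 : j < n) : jU M N j ≤ j + 1 :=
  le_trans (min_le_left _ _) (ua_le_succ M h1 h2)

lemma jU_le_n {j : ℕ} (h1 : 1 ≤ j) (h2 : j < n) : jU M N j ≤ n :=
  le_trans (min_le_left _ _) (ua_le_n M h1 h2)

lemma ju_spec {j : ℕ} (h1 : 1 ≤ j) (h2 : j < n) :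
    ju M N j ≤ jU M N j ∧ (ju M N j = 1 ∨ j < jL M N (ju M N j)) := by
  have hne : {i | i ≤ jU M N j ∧ (i = 1 ∨ j < jL M N i)}.Nonempty :=
    ⟨1, jU_pos h1 h2, Or.inl rfl⟩
  exact Nat.sSup_mem hne (ju_bdd j)

lemma ju_ge {i j : ℕ} (ha : i ≤ jU M N j) (hb : i = 1 ∨ j < jL M N i) :
    i ≤ ju M N j :=
  le_csSup (ju_bdd j) ⟨ha, hb⟩

lemma ju_pos {j : ℕ} (h1 : 1 ≤ j) (h2 : j < n) : 1 ≤ ju M N j :=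
  ju_ge (jU_pos h1 h2) (Or.inl rfl)

lemma jL_lb {i : ℕ} (h2 : 2 ≤ i) (h3 : i ≤ n) : i - 1 ≤ jL M N i :=
  le_min (la_lb M h2 h3) (la_lb N h2 h3)

lemma jL_le_n {i : ℕ} (h2 : 2 ≤ i) (h3 : i ≤ n) : jL M N i ≤ n :=
  le_trans (min_le_left _ _) (la_le M h2 h3)

variable (M N)

/-- The cells of the join of two small fb-tableaux. -/
def joinCells : Set Cell :=
  {c | c = root n ∨ (∃ j, 1 ≤ j ∧ j < n ∧ c = ((ju M N j, j) : Cell)) ∨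
    (∃ i, 2 ≤ i ∧ i ≤ n ∧ c = ((i, jL M N i) : Cell))}

variable {M N}

lemma mem_joinCells {c : Cell} :
    c ∈ joinCells M N ↔ (c = root n ∨
      (∃ j, 1 ≤ j ∧ j < n ∧ c = ((ju M N j, j) : Cell)) ∨
      (∃ i, 2 ≤ i ∧ i ≤ n ∧ c = ((i, jL M N i) : Cell))) := Iff.rfl

/-- The join of two small fb-tableaux, as an fb-tableau. -/
noncomputable def joinFB (hn : 1 ≤ n) (M N : FB n) (hM : IsSmall M) (hN : IsSmall N) :
    FB n where
  cells := joinCells M N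
  isCell_of_mem := by
    intro c hc
    rcases mem_joinCells.1 hc with hr | ⟨j, hj1, hj2, rfl⟩ | ⟨i, hi1, hi2, rfl⟩
    · rw [hr]
      exact ⟨le_refl _, hn, hn, le_refl _, Or.inl (by norm_num [root])⟩
    · have h1 := ju_pos (M := M) (N := N) hj1 hj2
      have h2 := le_trans (ju_spec (M := M) (N := N) hj1 hj2).1 (jU_le_n hj1 hj2)
      have h3 := le_trans (ju_spec (M := M) (N := N) hj1 hj2).1 (jU_le_succ hj1 hj2)
      exact ⟨h1, h2, hj1, by omega, Or.inr (by omega)⟩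
    · have h1 := jL_lb (M := M) (N := N) hi1 hi2
      have h2 := jL_le_n (M := M) (N := N) hi1 hi2
      exact ⟨by omega, hi2, by omega, h2, Or.inr (by omega)⟩
  root_mem := Or.inl rfl
  border_mem := by
    rintro ⟨i, j⟩ ⟨hb1, hb2, hb3⟩
    simp only at hb1 hb2 hb3
    subst hb3
    by_cases h : jL M N i = i - 1
    · exact Or.inr (Or.inr ⟨i, hb1, hb2, by rw [h]⟩)
    · have hgt : i - 1 < jL M N i := lt_of_le_of_ne (jL_lb hb1 hb2) (Ne.symm h)
      have hMgt : i - 1 < la M i := lt_of_lt_of_le hgt (min_le_left _ _)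
      have hNgt : i - 1 < la N i := lt_of_lt_of_le hgt (min_le_right _ _)
      have hiM := hM.border_up hb1 hb2 (by omega)
      have hiN := hN.border_up hb1 hb2 (by omega)
      have hjU : jU M N (i - 1) = i := by
        have : jU M N (i - 1) = min (ua M (i - 1)) (ua N (i - 1)) := rfl
        rw [this, hiM, hiN, min_self]
      have hju : ju M N (i - 1) = i := by
        refine le_antisymm ?_ (ju_ge (by omega) (Or.inr hgt))
        have := (ju_spec (M := M) (N := N) (by omega : 1 ≤ i - 1) (by omega : i - 1 < n)).1
        omega
      refine Or.inr (Or.inl ⟨i - 1, by omega, by omega, ?_⟩)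
      rw [hju]
  supported := by
    intro c hc hne
    rcases mem_joinCells.1 hc with hr | ⟨j, hj1, hj2, rfl⟩ | ⟨i, hi1, hi2, rfl⟩
    · exact absurd hr hne
    · by_cases hju1 : ju M N j = 1
      · refine Or.inl ⟨n, by simpa using hj2, ?_⟩
        simp only [hju1]
        exact Or.inl rfl
      · have h2 : 2 ≤ ju M N j := by
          have := ju_pos (M := M) (N := N) hj1 hj2
          omega
        have hlt : j < jL M N (ju M N j) := by
          rcases (ju_spec (M := M) (N := N) hj1 hj2).2 with h | h
          · exact absurd h hju1
          · exact h
        have hun : ju M N j ≤ n := le_trans (ju_spec (M := M) (N := N) hj1 hj2).1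
          (jU_le_n hj1 hj2)
        exact Or.inl ⟨jL M N (ju M N j), hlt,
          Or.inr (Or.inr ⟨ju M N j, h2, hun, rfl⟩)⟩
    · by_cases hjn : jL M N i = n
      · refine Or.inr ⟨1, by omega, ?_⟩
        simp only [hjn]
        exact Or.inl rfl
      · have hl1 : 1 ≤ jL M N i := by
          have := jL_lb (M := M) (N := N) hi1 hi2
          omega
        have hl2 : jL M N i < n :=
          lt_of_le_of_ne (jL_le_n hi1 hi2) hjn
        have hlt : ju M N (jL M N i) < i := by
          have hle := (ju_spec (M := M) (N := N) hl1 hl2).1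
          rcases min_choice (la M i) (la N i) with h | h
          · have hsup := la_supp M hi1 hi2
            have hh : jL M N i = la M i := h
            have hmin : jU M N (jL M N i) ≤ ua M (jL M N i) := min_le_left _ _
            rw [hh] at hmin hle ⊢
            omega
          · have hsup := la_supp N hi1 hi2
            have hh : jL M N i = la N i := h
            have hmin : jU M N (jL M N i) ≤ ua N (jL M N i) := min_le_right _ _
            rw [hh] at hmin hle ⊢
            omega
        exact Or.inr ⟨ju M N (jL M N i), hlt,
          Or.inr (Or.inl ⟨jL M N i, hl1, hl2, rfl⟩)⟩

end Join
section JoinLemmas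

variable (hn : 1 ≤ n) {M N : FB n} (hM : IsSmall M) (hN : IsSmall N)

lemma mem_joinFB_ju {j : ℕ} (h1 : 1 ≤ j) (h2 : j < n) :
    ((ju M N j, j) : Cell) ∈ (joinFB hn M N hM hN).cells :=
  Or.inr (Or.inl ⟨j, h1, h2, rfl⟩)

lemma mem_joinFB_jL {i : ℕ} (h2 : 2 ≤ i) (h3 : i ≤ n) :
    ((i, jL M N i) : Cell) ∈ (joinFB hn M N hM hN).cells :=
  Or.inr (Or.inr ⟨i, h2, h3, rfl⟩)

lemma ua_joinFB {j : ℕ} (h1 : 1 ≤ j) (h2 : j < n) :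
    ua (joinFB hn M N hM hN) j = ju M N j := by
  refine le_antisymm (ua_le _ (mem_joinFB_ju hn hM hN h1 h2)) ?_
  have hm := ua_mem (joinFB hn M N hM hN) h1 h2
  rcases mem_joinCells.1 hm with hr | ⟨j', hj1, hj2, heq⟩ | ⟨i, hi1, hi2, heq⟩
  · exfalso
    have : j = n := congrArg Prod.snd hr
    omega
  · have e1 : ua (joinFB hn M N hM hN) j = ju M N j' := congrArg Prod.fst heq
    have e2 : j = j' := congrArg Prod.snd heq
    subst e2
    omega
  · have e1 : ua (joinFB hn M N hM hN) j = i := congrArg Prod.fst heq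
    have e2 : j = jL M N i := congrArg Prod.snd heq
    have hju : ju M N j < i := by
      have hle := (ju_spec (M := M) (N := N) h1 h2).1
      rcases min_choice (la M i) (la N i) with h | h
      · have hsup := la_supp M hi1 hi2
        have hh : jL M N i = la M i := h
        have hmin : jU M N j ≤ ua M j := min_le_left _ _
        rw [e2, hh] at hle hmin ⊢
        omega
      · have hsup := la_supp N hi1 hi2
        have hh : jL M N i = la N i := h
        have hmin : jU M N j ≤ ua N j := min_le_right _ _
        rw [e2, hh] at hle hmin ⊢
        omega
    omega

lemma la_joinFB {i : ℕ} (h2 : 2 ≤ i) (h3 : i ≤ n) :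
    la (joinFB hn M N hM hN) i = jL M N i := by
  refine le_antisymm ?_ (la_max _ (mem_joinFB_jL hn hM hN h2 h3))
  have hm := la_mem (joinFB hn M N hM hN) h2 h3
  rcases mem_joinCells.1 hm with hr | ⟨j, hj1, hj2, heq⟩ | ⟨i', hi1, hi2, heq⟩
  · exfalso
    have : i = 1 := congrArg Prod.fst hr
    omega
  · have e1 : i = ju M N j := congrArg Prod.fst heq
    have e2 : la (joinFB hn M N hM hN) i = j := congrArg Prod.snd heq
    have hju1 : ju M N j ≠ 1 := by omega
    have hlt : j < jL M N (ju M N j) := by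
      rcases (ju_spec (M := M) (N := N) hj1 hj2).2 with h | h
      · exact absurd h hju1
      · exact h
    rw [← e1] at hlt
    omega
  · have e1 : i = i' := congrArg Prod.fst heq
    have e2 : la (joinFB hn M N hM hN) i = jL M N i' := congrArg Prod.snd heq
    rw [← e1] at e2
    omega

lemma joinFB_small : IsSmall (joinFB hn M N hM hN) := by
  intro c hc hne
  rcases mem_joinCells.1 hc with hr | ⟨j, hj1, hj2, rfl⟩ | ⟨i, hi1, hi2, rfl⟩
  · exact absurd hr hne
  · right
    have := isUpArrow_ua (joinFB hn M N hM hN) hj1 hj2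
    rwa [ua_joinFB hn hM hN hj1 hj2] at this
  · left
    have := isLeftArrow_la (joinFB hn M N hM hN) hi1 hi2
    rwa [la_joinFB hn hM hN hi1 hi2] at this

lemma joinFB_lhd_left : Lhd M (joinFB hn M N hM hN) := by
  refine ⟨?_, ?_, ?_⟩
  · rw [colSp_subset_iff]
    intro j hj1 hj2
    rw [ua_joinFB hn hM hN hj1 hj2]
    exact le_trans (ju_spec (M := M) (N := N) hj1 hj2).1 (min_le_left _ _)
  · rw [rowSp_subset_iff]
    intro i hi1 hi2
    rw [la_joinFB hn hM hN hi1 hi2]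
    exact min_le_left _ _
  · intro c hfM hfQ hc
    exact absurd hfM (hM.not_free hc)

lemma joinFB_lhd_right : Lhd N (joinFB hn M N hM hN) := by
  refine ⟨?_, ?_, ?_⟩
  · rw [colSp_subset_iff]
    intro j hj1 hj2
    rw [ua_joinFB hn hM hN hj1 hj2]
    exact le_trans (ju_spec (M := M) (N := N) hj1 hj2).1 (min_le_right _ _)
  · rw [rowSp_subset_iff]
    intro i hi1 hi2
    rw [la_joinFB hn hM hN hi1 hi2]
    exact min_le_right _ _
  · intro c hfN hfQ hc
    exact absurd hfN (hN.not_free hc)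

lemma joinFB_lub (t : FB n) (hMt : Lhd M t) (hNt : Lhd N t) :
    Lhd (joinFB hn M N hM hN) t := by
  refine ⟨?_, ?_, ?_⟩
  · rw [colSp_subset_iff]
    intro j hj1 hj2
    rw [ua_joinFB hn hM hN hj1 hj2]
    refine ju_ge (le_min (lhd_ua hMt hj1 hj2) (lhd_ua hNt hj1 hj2)) ?_
    by_cases h1 : ua t j = 1
    · exact Or.inl h1
    · have h2 : 2 ≤ ua t j := by
        have := ua_pos t hj1 hj2
        omega
      have h3 : ua t j ≤ n := ua_le_n t hj1 hj2
      have hsup := ua_supp t hj1 hj2 h2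
      have hlM := lhd_la hMt h2 h3
      have hlN := lhd_la hNt h2 h3
      refine Or.inr (lt_of_lt_of_le hsup (le_min ?_ ?_)) <;> omega
  · rw [rowSp_subset_iff]
    intro i hi1 hi2
    rw [la_joinFB hn hM hN hi1 hi2]
    exact le_min (lhd_la hMt hi1 hi2) (lhd_la hNt hi1 hi2)
  · intro c hfQ hft hc
    exact absurd hfQ ((joinFB_small hn hM hN).not_free hc)

lemma joinFB_isJoin : IsJoin M N (joinFB hn M N hM hN) :=
  ⟨joinFB_lhd_left hn hM hN, joinFB_lhd_right hn hM hN,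
    fun t hMt hNt => joinFB_lub hn hM hN t hMt hNt⟩

lemma joinFB_binary (hMb : IsBinary M) (hNb : IsBinary N) :
    IsBinary (joinFB hn M N hM hN) := by
  intro c hf
  have hcell := hf.1
  have h2c : 2 ≤ c.1 := hf.row_ge
  have h3c : c.1 ≤ n := hcell.2.1
  have hcol1 : 1 ≤ c.2 := hcell.2.2.1
  have hcoln : c.2 < n := hf.col_lt
  have hju : ju M N c.2 < c.1 := by
    have := hf.ua_lt
    rwa [ua_joinFB hn hM hN hcol1 hcoln] at this
  have hjl : c.2 < jL M N c.1 := by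
    have := hf.lt_la
    rwa [la_joinFB hn hM hN h2c h3c] at this
  have hMua : c.1 ≤ ua M c.2 := by
    by_contra hlt
    push_neg at hlt
    exact hMb c (isFree_mk M hcell h2c hcoln hlt
      (lt_of_lt_of_le hjl (min_le_left _ _)))
  have hNua : c.1 ≤ ua N c.2 := by
    by_contra hlt
    push_neg at hlt
    exact hNb c (isFree_mk N hcell h2c hcoln hlt
      (lt_of_lt_of_le hjl (min_le_right _ _)))
  have : c.1 ≤ ju M N c.2 := ju_ge (le_min hMua hNua) (Or.inr hjl)
  omega

end JoinLemmas

lemma IsBinary.isSmall {T : FB n} (hB : IsBinary T) : IsSmall T := by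
  intro c hc hne
  rcases mem_cases hc with hr | hl | hu | hf
  · exact absurd hr hne
  · exact Or.inl hl
  · exact Or.inr hu
  · exact absurd hf (hB c)

/-- meets and joins of small fb-tableaux are small, meets and joins of
binary fb-tableaux are binary; consequently the small fb-tableaux form a sublattice
`sTam n` of `esTam n`, and the binary fb-tableaux form a sublattice `Tam n` of
`sTam n` (in particular every binary fb-tableau is small). -/
theorem small_binary_sublattices (n : ℕ) (hn : 1 ≤ n) :
    (∀ M N L : FB n, IsSmall M → IsSmall N → IsMeet M N L → IsSmall L) ∧
    (∀ M N L : FB n, IsSmall M → IsSmall N → IsJoin M N L → IsSmall L) ∧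
    (∀ M N L : FB n, IsBinary M → IsBinary N → IsMeet M N L → IsBinary L) ∧
    (∀ M N L : FB n, IsBinary M → IsBinary N → IsJoin M N L → IsBinary L) ∧
    (∀ T : FB n, IsBinary T → IsSmall T) := by
  refine ⟨?_, ?_, ?_, ?_, fun T hB => hB.isSmall⟩
  · intro M N L hM hN hL
    have h1 : Lhd L (meetFB hn M N hM hN) := meetFB_glb hn hM hN L hL.1 hL.2.1
    have h2 : Lhd (meetFB hn M N hM hN) L :=
      hL.2.2 _ (meetFB_lhd_left hn hM hN) (meetFB_lhd_right hn hM hN)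
    rw [lhd_antisymm h1 h2]
    exact meetFB_small hn hM hN
  · intro M N L hM hN hL
    have h1 : Lhd L (joinFB hn M N hM hN) :=
      hL.2.2 _ (joinFB_lhd_left hn hM hN) (joinFB_lhd_right hn hM hN)
    have h2 : Lhd (joinFB hn M N hM hN) L := joinFB_lub hn hM hN L hL.1 hL.2.1
    rw [lhd_antisymm h1 h2]
    exact joinFB_small hn hM hN
  · intro M N L hM hN hL
    have hMs := hM.isSmall
    have hNs := hN.isSmall
    have h1 : Lhd L (meetFB hn M N hMs hNs) := meetFB_glb hn hMs hNs L hL.1 hL.2.1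
    have h2 : Lhd (meetFB hn M N hMs hNs) L :=
      hL.2.2 _ (meetFB_lhd_left hn hMs hNs) (meetFB_lhd_right hn hMs hNs)
    rw [lhd_antisymm h1 h2]
    exact meetFB_binary hn hMs hNs hM hN
  · intro M N L hM hN hL
    have hMs := hM.isSmall
    have hNs := hN.isSmall
    have h1 : Lhd L (joinFB hn M N hMs hNs) :=
      hL.2.2 _ (joinFB_lhd_left hn hMs hNs) (joinFB_lhd_right hn hMs hNs)
    have h2 : Lhd (joinFB hn M N hMs hNs) L := joinFB_lub hn hMs hNs L hL.1 hL.2.1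
    rw [lhd_antisymm h1 h2]
    exact joinFB_binary hn hMs hNs hM hN


end EsTam
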